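/- Consider N cells indexed i = 1,…,N, with common fluxes f_{1/2}, f_{3/2}, …, f_{N+1/2} ∈ ℝ, where the flux f_{i+1/2} is shared between cells i and i+1. For each cell let F_i : ℝ → ℝ be differentiable on [-1,1] with continuous derivative, and let g₋, g₊ : ℝ → ℝ be differentiable on [-1,1] with continuous derivatives satisfying g₋(-1) = 1, g₋(1) = 0, g₊(-1) = 0, g₊(1) = 1. Then the sum over all cells of the FR residual integrals, ∑_{i=1}^{N} ∫_{-1}^{1} [F_i'(ξ) + (f_{i-1/2} - F_i(-1))·g₋'(ξ) + (f_{i+1/2} - F_i(1))·g₊'(ξ)] dξ, telescopes to f_{N+1/2} - f_{1/2}. In particular, under periodic boundary conditions (f_{N+1/2} = f_{1/2}) this sum vanishes, so the integral of the solution over the entire computational domain is conserved by the semi-discrete FR scheme. -/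
import Mathlib


/-- Conservation of the semi-discrete FR scheme: over `N` cells, with `f i`
denoting the common flux `f_{i+1/2}` shared between cells `i` and `i+1`
(so `f 0 = f_{1/2}` and `f N = f_{N+1/2}`), the sum of the FR residual
integrals telescopes to `f N - f 0`; in particular it vanishes under periodic
boundary conditions `f N = f 0`, so the total integral of the solution over
the whole domain is conserved. -/
theorem FR_conservation
    (N : ℕ) (f : ℕ → ℝ) (F F' : ℕ → ℝ → ℝ) (gm gp gm' gp' : ℝ → ℝ)
    (hF : ∀ i ∈ Finset.range N, ∀ x ∈ Set.uIcc (-1 : ℝ) 1,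
        HasDerivAt (F i) (F' i x) x)
    (hF' : ∀ i ∈ Finset.range N, ContinuousOn (F' i) (Set.uIcc (-1 : ℝ) 1))
    (hgm : ∀ x ∈ Set.uIcc (-1 : ℝ) 1, HasDerivAt gm (gm' x) x)
    (hgp : ∀ x ∈ Set.uIcc (-1 : ℝ) 1, HasDerivAt gp (gp' x) x)
    (hgm' : ContinuousOn gm' (Set.uIcc (-1 : ℝ) 1))
    (hgp' : ContinuousOn gp' (Set.uIcc (-1 : ℝ) 1))
    (hgm_l : gm (-1) = 1) (hgm_r : gm 1 = 0)
    (hgp_l : gp (-1) = 0) (hgp_r : gp 1 = 1) :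
    (∑ i ∈ Finset.range N, ∫ ξ in (-1 : ℝ)..1,
        (F' i ξ + (f i - F i (-1)) * gm' ξ + (f (i + 1) - F i 1) * gp' ξ))
      = f N - f 0 ∧
    (f N = f 0 →
      (∑ i ∈ Finset.range N, ∫ ξ in (-1 : ℝ)..1,
        (F' i ξ + (f i - F i (-1)) * gm' ξ + (f (i + 1) - F i 1) * gp' ξ)) = 0) := by
  have key : ∀ i ∈ Finset.range N,
      (∫ ξ in (-1 : ℝ)..1,
        (F' i ξ + (f i - F i (-1)) * gm' ξ + (f (i + 1) - F i 1) * gp' ξ))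
      = f (i + 1) - f i := by
    intro i hi
    have hderiv : ∀ x ∈ Set.uIcc (-1 : ℝ) 1,
        HasDerivAt (fun y => F i y + (f i - F i (-1)) * gm y + (f (i + 1) - F i 1) * gp y)
          (F' i x + (f i - F i (-1)) * gm' x + (f (i + 1) - F i 1) * gp' x) x := by
      intro x hx
      exact ((hF i hi x hx).add ((hgm x hx).const_mul _)).add ((hgp x hx).const_mul _)
    have hint : IntervalIntegrable
        (fun x => F' i x + (f i - F i (-1)) * gm' x + (f (i + 1) - F i 1) * gp' x)
        MeasureTheory.volume (-1 : ℝ) 1 :=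
      (((hF' i hi).add (continuousOn_const.mul hgm')).add (continuousOn_const.mul hgp')).intervalIntegrable
    rw [intervalIntegral.integral_eq_sub_of_hasDerivAt hderiv hint]
    simp [hgm_l, hgm_r, hgp_l, hgp_r]
  rw [Finset.sum_congr rfl key, Finset.sum_range_sub]
  exact ⟨rfl, fun h => by rw [h]; ring⟩
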